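/- In the greedy maximum-coverage-with-partition setting, the first two greedy iterations satisfy: |V_{i₁*}| ≥ |Ṽ*|/N and |Ṽ_2| = |V_{i₁*} ∪ V_{i₂*}| ≥ |Ṽ*|/(N−1) + ((N−3)/(N−1))·|V_{i₁*}| for N ≥ 2. -/
import Mathlib


open Finset

variable {X : Type*} [Fintype X] [DecidableEq X]

/-- The union of the greedy picks made before iteration `t`. -/
def greedyUnion (g : ℕ → Finset X) (t : ℕ) : Finset X := (Finset.range t).biUnion g

/-- The hypotheses modelling problem `P` and the greedy Algorithm 1:
`U i` is the (nonempty, downward-closed) family of candidate sets of collection `i`;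
`Vstar` is an optimal selection; at iteration `t < N` the greedy algorithm picks the
not-yet-used collection `ord t` and a set `g t ∈ U (ord t)` maximizing the size of the
union with everything picked so far. -/
structure GreedySetting (N : ℕ) (U : Fin N → Set (Finset X)) (Vstar : Fin N → Finset X)
    (ord : ℕ → Fin N) (g : ℕ → Finset X) : Prop where
  nonempty : ∀ i, (U i).Nonempty
  downClosed : ∀ i, ∀ V ∈ U i, ∀ W ⊆ V, W ∈ U i
  star_mem : ∀ i, Vstar i ∈ U i
  star_opt : ∀ W : Fin N → Finset X, (∀ i, W i ∈ U i) →
    (Finset.univ.biUnion W).card ≤ (Finset.univ.biUnion Vstar).card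
  ord_inj : ∀ s t, s < N → t < N → ord s = ord t → s = t
  pick_mem : ∀ t < N, g t ∈ U (ord t)
  pick_greedy : ∀ t < N, ∀ i : Fin N, (∀ s < t, ord s ≠ i) → ∀ V ∈ U i,
    (greedyUnion g t ∪ V).card ≤ (greedyUnion g t ∪ g t).card

/-- The first two greedy iterations satisfy `|V_{i₁*}| ≥ |Ṽ*|/N` and
`|Ṽ₂| = |V_{i₁*} ∪ V_{i₂*}| ≥ |Ṽ*|/(N−1) + ((N−3)/(N−1))·|V_{i₁*}|` for `N ≥ 2`. -/
theorem greedy_first_two_iterations {N : ℕ} (hN : 2 ≤ N) (U : Fin N → Set (Finset X))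
    (Vstar : Fin N → Finset X) (ord : ℕ → Fin N) (g : ℕ → Finset X)
    (hs : GreedySetting N U Vstar ord g) :
    (((g 0).card : ℝ) ≥ ((Finset.univ.biUnion Vstar).card : ℝ) / N) ∧
    (((g 0 ∪ g 1).card : ℝ) ≥
        ((Finset.univ.biUnion Vstar).card : ℝ) / ((N : ℝ) - 1) +
          (((N : ℝ) - 3) / ((N : ℝ) - 1)) * ((g 0).card : ℝ)) := by

  have hN0 : 0 < N := by omega
  have hN1 : 1 < N := hN
  set S := (Finset.univ.biUnion Vstar).card with hSdef
  -- every candidate set has size at most |g 0|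
  have h0 : ∀ i : Fin N, (Vstar i).card ≤ (g 0).card := by
    intro i
    have := hs.pick_greedy 0 hN0 i (fun s hs' => absurd hs' (by omega)) (Vstar i)
      (hs.star_mem i)
    simpa [greedyUnion] using this
  have h1 : S ≤ N * (g 0).card := by
    calc S ≤ ∑ i, (Vstar i).card := card_biUnion_le
    _ ≤ ∑ _i : Fin N, (g 0).card := Finset.sum_le_sum fun i _ => h0 i
    _ = N * (g 0).card := by simp [Finset.sum_const, mul_comm]
  constructor
  · rw [ge_iff_le, div_le_iff₀ (by positivity : (0:ℝ) < (N:ℝ))]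
    have : (S : ℝ) ≤ (N : ℝ) * (g 0).card := by exact_mod_cast h1
    linarith
  · set i0 := ord 0 with hi0
    have hg1 : greedyUnion g 1 = g 0 := by simp [greedyUnion]
    have key : ∀ i ∈ Finset.univ.erase i0, (Vstar i \ g 0).card + (g 0).card ≤ (g 0 ∪ g 1).card := by
      intro i hi
      have hne : i ≠ i0 := Finset.ne_of_mem_erase hi
      have hpick := hs.pick_greedy 1 hN1 i
        (fun s hs' => by
          have : s = 0 := by omega
          subst this
          exact fun h => hne h.symm) (Vstar i) (hs.star_mem i)
      rw [hg1] at hpick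
      calc (Vstar i \ g 0).card + (g 0).card = (Vstar i ∪ g 0).card :=
            Finset.card_sdiff_add_card _ _
        _ = (g 0 ∪ Vstar i).card := by rw [Finset.union_comm]
        _ ≤ (g 0 ∪ g 1).card := hpick
    have hcard_erase : (Finset.univ.erase i0).card = N - 1 := by
      simp [Finset.card_erase_of_mem, Finset.card_univ]
    have h2 : (∑ i ∈ Finset.univ.erase i0, (Vstar i \ g 0).card) + (N-1) * (g 0).card
        ≤ (N-1) * (g 0 ∪ g 1).card := by
      have := Finset.sum_le_sum key
      simpa [Finset.sum_add_distrib, Finset.sum_const, hcard_erase, smul_eq_mul,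
        mul_comm] using this
    have h3 : S ≤ 2 * (g 0).card + ∑ i ∈ Finset.univ.erase i0, (Vstar i \ g 0).card := by
      have hsub : Finset.univ.biUnion Vstar ⊆
          g 0 ∪ Finset.univ.biUnion (fun i => Vstar i \ g 0) := by
        intro x hx
        simp only [Finset.mem_biUnion, Finset.mem_univ, true_and] at hx
        obtain ⟨i, hi⟩ := hx
        by_cases hxg : x ∈ g 0
        · exact Finset.mem_union_left _ hxg
        · refine Finset.mem_union_right _ ?_
          simp only [Finset.mem_biUnion, Finset.mem_univ, true_and, Finset.mem_sdiff]
          exact ⟨i, hi, hxg⟩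
      calc S ≤ (g 0 ∪ Finset.univ.biUnion (fun i => Vstar i \ g 0)).card :=
            Finset.card_le_card hsub
        _ ≤ (g 0).card + (Finset.univ.biUnion (fun i => Vstar i \ g 0)).card :=
            Finset.card_union_le _ _
        _ ≤ (g 0).card + ∑ i, (Vstar i \ g 0).card := by
            gcongr
            exact card_biUnion_le
        _ = (g 0).card + ((Vstar i0 \ g 0).card +
              ∑ i ∈ Finset.univ.erase i0, (Vstar i \ g 0).card) := by
            rw [← Finset.add_sum_erase _ _ (Finset.mem_univ i0)]
        _ ≤ (g 0).card + ((g 0).card +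
              ∑ i ∈ Finset.univ.erase i0, (Vstar i \ g 0).card) := by
            have : (Vstar i0 \ g 0).card ≤ (g 0).card :=
              le_trans (Finset.card_le_card Finset.sdiff_subset) (h0 i0)
            omega
        _ = 2 * (g 0).card + ∑ i ∈ Finset.univ.erase i0, (Vstar i \ g 0).card := by ring
    have h4 : S + (N-1) * (g 0).card ≤ 2 * (g 0).card + (N-1) * (g 0 ∪ g 1).card := by
      linarith
    have hcast : (S:ℝ) + ((N:ℝ)-1) * (g 0).card ≤
        2 * (g 0).card + ((N:ℝ)-1) * (g 0 ∪ g 1).card := by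
      have h5 : (S:ℝ) + ((N-1:ℕ):ℝ) * (g 0).card ≤
          2 * (g 0).card + ((N-1:ℕ):ℝ) * (g 0 ∪ g 1).card := by exact_mod_cast h4
      rwa [Nat.cast_sub (by omega), Nat.cast_one] at h5
    have hpos : (0:ℝ) < (N:ℝ) - 1 := by
      have : (2:ℝ) ≤ (N:ℝ) := by exact_mod_cast hN
      linarith
    rw [ge_iff_le, show (S:ℝ) / ((N:ℝ)-1) + (((N:ℝ)-3)/((N:ℝ)-1)) * (g 0).card
      = ((S:ℝ) + ((N:ℝ)-3) * (g 0).card) / ((N:ℝ)-1) by ring, div_le_iff₀ hpos]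
    nlinarith [hcast]
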